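/- arXiv:1901.00754 — 13 statements merged into one kernel-verified Lean document; each statement's English description precedes it below -/
import Mathlib

section
/- Let P : D × D → {0,1} be a binary predicate on a finite domain D, and suppose there exist two-element subsets B, C ⊆ D such that P|_{B×C} is a singleton. Then for every n ≥ 1 the following CSP(P) instance I has 2n variables and n² constraints and the property that for every 0 < ε < 1 every ε-sparsifier of I contains all n² constraints: the variable set is the disjoint union X ⊔ Y with X = {x₁,...,x_n}, Y = {y₁,...,y_n}, the scope set is {(x_i, y_j) : 1 ≤ i, j ≤ n}, and the weights are arbitrary positive reals. -/
/-- The value of a binary CSP instance with predicate `P`, scope set `S`,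
weights `w`, under assignment `A`. -/
def cspVal {W D : Type*} (P : D → D → Bool) (S : Finset (W × W)) (w : W × W → ℝ)
    (A : W → D) : ℝ :=
  ∑ e ∈ S, w e * (if P (A e.1) (A e.2) then 1 else 0)

/-- if `P` restricted to some `B × C` with `|B| = |C| = 2` is a
singleton, then the complete bipartite instance on `X ⊔ Y` with `|X| = |Y| = n`
has `2n` variables and `n²` constraints, and every ε-sparsifier of it must keep
all `n²` constraints. -/
theorem stmt1 {D : Type} [Fintype D] [DecidableEq D] (P : D → D → Bool)
    (B C : Finset D) (hB : B.card = 2) (hC : C.card = 2)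
    (hsing : ∃! p : D × D, p.1 ∈ B ∧ p.2 ∈ C ∧ P p.1 p.2 = true)
    (n : ℕ) (hn : 1 ≤ n)
    (S : Finset ((Fin n ⊕ Fin n) × (Fin n ⊕ Fin n)))
    (hS : S = (Finset.univ : Finset (Fin n × Fin n)).image
      (fun p => (Sum.inl p.1, Sum.inr p.2)))
    (w : (Fin n ⊕ Fin n) × (Fin n ⊕ Fin n) → ℝ)
    (hw : ∀ e ∈ S, 0 < w e) :
    Fintype.card (Fin n ⊕ Fin n) = 2 * n ∧ S.card = n ^ 2 ∧
    ∀ ε : ℝ, 0 < ε → ε < 1 →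
      ∀ (S' : Finset ((Fin n ⊕ Fin n) × (Fin n ⊕ Fin n)))
        (w' : (Fin n ⊕ Fin n) × (Fin n ⊕ Fin n) → ℝ),
        S' ⊆ S → (∀ e ∈ S', 0 < w' e) →
        (∀ A : (Fin n ⊕ Fin n) → D,
          (1 - ε) * cspVal P S w A ≤ cspVal P S' w' A ∧
          cspVal P S' w' A ≤ (1 + ε) * cspVal P S w A) →
        S' = S := by
  obtain ⟨⟨b₀, c₀⟩, ⟨hb₀, hc₀, hP0⟩, huniq⟩ := hsing
  obtain ⟨b₁, hb₁B, hb₁ne⟩ := Finset.exists_mem_ne (s := B) (by omega) b₀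
  obtain ⟨c₁, hc₁C, hc₁ne⟩ := Finset.exists_mem_ne (s := C) (by omega) c₀
  have hP' : ∀ x ∈ B, ∀ y ∈ C, P x y = true → x = b₀ ∧ y = c₀ := by
    intro x hx y hy h
    have := huniq (x, y) ⟨hx, hy, h⟩
    exact ⟨congrArg Prod.fst this, congrArg Prod.snd this⟩
  have hinj : Function.Injective
      (fun p : Fin n × Fin n => ((Sum.inl p.1, Sum.inr p.2) :
        (Fin n ⊕ Fin n) × (Fin n ⊕ Fin n))) := by
    intro p q h
    simp only [Prod.mk.injEq, Sum.inl.injEq, Sum.inr.injEq] at h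
    exact Prod.ext h.1 h.2
  refine ⟨by simp [two_mul], ?_, ?_⟩
  · rw [hS, Finset.card_image_of_injective _ hinj]
    simp [sq]
  · intro ε hε hε1 S' w' hsub hw' happ
    by_contra hne
    obtain ⟨e, heS, heS'⟩ := Finset.exists_of_ssubset (hsub.ssubset_of_ne hne)
    obtain ⟨⟨i, j⟩, -, rfl⟩ := Finset.mem_image.1 (hS ▸ heS)
    set A : (Fin n ⊕ Fin n) → D :=
      Sum.elim (fun k => if k = i then b₀ else b₁)
        (fun l => if l = j then c₀ else c₁) with hA
    have hind : ∀ k l : Fin n,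
        P (A (Sum.inl k)) (A (Sum.inr l)) = true ↔ k = i ∧ l = j := by
      intro k l
      constructor
      · intro h
        simp only [hA, Sum.elim_inl, Sum.elim_inr] at h
        by_cases hk : k = i <;> by_cases hl : l = j
        · exact ⟨hk, hl⟩
        · rw [if_pos hk, if_neg hl] at h
          exact absurd (hP' _ hb₀ _ hc₁C h).2 hc₁ne
        · rw [if_neg hk, if_pos hl] at h
          exact absurd (hP' _ hb₁B _ hc₀ h).1 hb₁ne
        · rw [if_neg hk, if_neg hl] at h
          exact absurd (hP' _ hb₁B _ hc₁C h).1 hb₁ne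
      · rintro ⟨rfl, rfl⟩
        simp [hA, hP0]
    have hS'val : cspVal P S' w' A = 0 := by
      apply Finset.sum_eq_zero
      intro e' he'
      obtain ⟨⟨k, l⟩, -, rfl⟩ := Finset.mem_image.1 (hS ▸ hsub he')
      have hne' : ¬ (k = i ∧ l = j) := by
        rintro ⟨rfl, rfl⟩
        exact heS' he'
      simp [ (hind k l).not.2 hne' ]
    have hSval : cspVal P S w A = w (Sum.inl i, Sum.inr j) := by
      rw [cspVal, Finset.sum_eq_single (Sum.inl i, Sum.inr j)]
      · simp [(hind i j).2 ⟨rfl, rfl⟩]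
      · intro e' he' hne'
        obtain ⟨⟨k, l⟩, -, rfl⟩ := Finset.mem_image.1 (hS ▸ he')
        have : ¬ (k = i ∧ l = j) := by
          rintro ⟨rfl, rfl⟩
          exact hne' rfl
        simp [(hind k l).not.2 this]
      · intro h
        exact absurd heS h
    have h1 := (happ A).1
    rw [hS'val, hSval] at h1
    have hwpos := hw _ heS
    nlinarith
end

section
/- Let G be a bipartite graph with parts U and V, |U| = |V| = r ≥ 2, all edges of G joining a vertex of U to a vertex of V. Suppose that for all distinct u, u' ∈ U and all distinct v, v' ∈ V, the number of edges of G with both endpoints in {u, u', v, v'} is not equal to 1. Let Ḡ be the bipartite complement of G, i.e., the bipartite graph on U ⊔ V whose edges are exactly the pairs {u, v} with u ∈ U, v ∈ V that are not edges of G. Then for every vertex x of positive degree in Ḡ, the connected component of x in Ḡ is a complete bipartite graph between its U-vertices and its V-vertices; that is, every u ∈ U and v ∈ V lying in the same connected component of Ḡ as x are adjacent in Ḡ. -/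
/-- The relation underlying the bipartite complement of the bipartite graph with
parts `U = Sum.inl`-vertices and `V = Sum.inr`-vertices and edge predicate `E`:
`u ∈ U` and `v ∈ V` are related exactly when `{u, v}` is a non-edge. -/
def bipCompRel {r : ℕ} (E : Fin r → Fin r → Bool) :
    (Fin r ⊕ Fin r) → (Fin r ⊕ Fin r) → Prop
  | Sum.inl u, Sum.inr v => ¬ E u v
  | _, _ => False

/-- if in the bipartite graph `G` (with parts of size `r ≥ 2`) no
quadruple `{u, u', v, v'}` with `u ≠ u'`, `v ≠ v'` induces exactly one edge,
then every connected component of the bipartite complement `Ḡ` containing a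
vertex of positive degree is a complete bipartite graph: any `u ∈ U` and
`v ∈ V` in the same component of `Ḡ` as such a vertex are adjacent in `Ḡ`. -/
theorem stmt3 {r : ℕ} (hr : 2 ≤ r) (E : Fin r → Fin r → Bool)
    (hE : ∀ u u' v v' : Fin r, u ≠ u' → v ≠ v' →
      ((({u, u'} : Finset (Fin r)) ×ˢ ({v, v'} : Finset (Fin r))).filter
        (fun p => E p.1 p.2)).card ≠ 1)
    (Gbar : SimpleGraph (Fin r ⊕ Fin r))
    (hG : Gbar = SimpleGraph.fromRel (bipCompRel E))
    (x : Fin r ⊕ Fin r) (hx : ∃ y, Gbar.Adj x y) :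
    ∀ u v : Fin r, Gbar.Reachable x (Sum.inl u) → Gbar.Reachable x (Sum.inr v) →
      Gbar.Adj (Sum.inl u) (Sum.inr v) := by
  subst hG
  have adj_iff : ∀ u v : Fin r,
      (SimpleGraph.fromRel (bipCompRel E)).Adj (Sum.inl u) (Sum.inr v) ↔ ¬ E u v := by
    intro u v
    simp [SimpleGraph.fromRel_adj, bipCompRel]
  have no_ll : ∀ u u' : Fin r,
      ¬ (SimpleGraph.fromRel (bipCompRel E)).Adj (Sum.inl u) (Sum.inl u') := by
    intro u u' h
    simp [SimpleGraph.fromRel_adj, bipCompRel] at h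
  have no_rr : ∀ v v' : Fin r,
      ¬ (SimpleGraph.fromRel (bipCompRel E)).Adj (Sum.inr v) (Sum.inr v') := by
    intro v v' h
    simp [SimpleGraph.fromRel_adj, bipCompRel] at h
  have quad : ∀ u u' v v' : Fin r, ¬ E u v → ¬ E u' v → ¬ E u' v' → ¬ E u v' := by
    intro u u' v v' h1 h2 h3
    by_cases huu : u = u'
    · subst huu; exact h3
    by_cases hvv : v = v'
    · subst hvv; exact h1
    intro h4
    apply hE u u' v v' huu hvv
    have hset : (({u, u'} : Finset (Fin r)) ×ˢ ({v, v'} : Finset (Fin r))).filter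
        (fun p => E p.1 p.2) = {(u, v')} := by
      ext ⟨a, b⟩
      simp only [Finset.mem_filter, Finset.mem_product, Finset.mem_insert,
        Finset.mem_singleton, Prod.mk.injEq]
      constructor
      · rintro ⟨⟨ha | ha, hb | hb⟩, hab⟩ <;> subst ha <;> subst hb <;> simp_all
      · rintro ⟨ha, hb⟩; subst ha; subst hb; simp_all
    rw [hset, Finset.card_singleton]
  have key : ∀ n (u v : Fin r)
      (p : (SimpleGraph.fromRel (bipCompRel E)).Walk (Sum.inl u) (Sum.inr v)),
      p.length ≤ n → ¬ E u v := by
    intro n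
    induction n with
    | zero =>
      intro u v p hp
      cases p with
      | cons h q => simp at hp
    | succ n ih =>
      intro u v p hp
      cases p with
      | cons h q =>
        rename_i y
        cases y with
        | inl u' => exact absurd h (no_ll u u')
        | inr v1 =>
          cases q with
          | nil => exact (adj_iff u v).mp h
          | cons h2 q2 =>
            rename_i z
            cases z with
            | inr v' => exact absurd h2 (no_rr v1 v')
            | inl u2 =>
              have hlen : q2.length ≤ n := by
                simp [SimpleGraph.Walk.length_cons] at hp
                omega
              have h3 : ¬ E u2 v := ih u2 v q2 hlen
              have h1 : ¬ E u v1 := (adj_iff u v1).mp h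
              have h2' : ¬ E u2 v1 := (adj_iff u2 v1).mp h2.symm
              exact quad u u2 v1 v h1 h2' h3
  intro u v h1 h2
  have hre : (SimpleGraph.fromRel (bipCompRel E)).Reachable (Sum.inl u) (Sum.inr v) :=
    h1.symm.trans h2
  obtain ⟨p⟩ := hre
  exact (adj_iff u v).mpr (key p.length u v p le_rfl)
end

section
/- Let r ≥ 2 and let P : [r]² → {0,1} be a binary predicate such that for all two-element subsets B, C ⊆ [r] the restriction P|_{B×C} is not a singleton. Then there exist an integer ℓ with 2 ≤ ℓ ≤ 2r and functions c₁, c₂ : [r] → [ℓ] such that for all i, j ∈ [r], P(i,j) = 1 if and only if c₁(i) ≠ c₂(j). -/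
/-- The restriction of `P` to `B × C` is a singleton: exactly one pair
`(b,c) ∈ B × C` satisfies `P b c = 1`. -/
def IsSingletonRestr {D : Type*} (P : D → D → Bool) (B C : Finset D) : Prop :=
  ∃! p : D × D, p.1 ∈ B ∧ p.2 ∈ C ∧ P p.1 p.2 = true

/-- if no restriction of `P : [r]² → {0,1}` (with `r ≥ 2`) to a
product of two-element subdomains is a singleton, then there exist
`2 ≤ ℓ ≤ 2r` and colourings `c₁ c₂ : [r] → [ℓ]` with
`P(i,j) = 1 ↔ c₁(i) ≠ c₂(j)`. -/
theorem stmt4 {r : ℕ} (hr : 2 ≤ r) (P : Fin r → Fin r → Bool)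
    (hP : ∀ B C : Finset (Fin r), B.card = 2 → C.card = 2 →
      ¬ IsSingletonRestr P B C) :
    ∃ ℓ : ℕ, 2 ≤ ℓ ∧ ℓ ≤ 2 * r ∧
      ∃ c₁ c₂ : Fin r → Fin ℓ, ∀ i j : Fin r, P i j = true ↔ c₁ i ≠ c₂ j := by
  -- Γ-freeness
  have gamma : ∀ i i' j j' : Fin r, P i j = false → P i j' = false →
      P i' j = false → P i' j' = false := by
    intro i i' j j' h1 h2 h3
    by_cases hii : i = i'
    · subst hii; exact h2
    by_cases hjj : j = j'
    · subst hjj; exact h3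
    by_contra h4
    have h4' : P i' j' = true := by simpa using h4
    apply hP {i, i'} {j, j'} (Finset.card_pair hii) (Finset.card_pair hjj)
    refine ⟨(i', j'), ⟨by simp, by simp, h4'⟩, ?_⟩
    rintro ⟨a, b⟩ ⟨ha, hb, hab⟩
    simp only [Finset.mem_insert, Finset.mem_singleton] at ha hb
    rcases ha with rfl | rfl <;> rcases hb with rfl | rfl <;> simp_all
  -- two columns sharing a false entry are equal
  have colEq : ∀ i a b : Fin r, P i a = false → P i b = false →
      (fun i' => P i' a) = (fun i' => P i' b) := by
    intro i a b ha hb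
    funext i'
    rcases h : P i' a with hv | hv
    · exact (gamma i i' a b ha hb h).symm
    · by_contra hne
      have h' : P i' b = false := by
        cases hP' : P i' b
        · rfl
        · exact absurd hP'.symm (by simp_all)
      have := gamma i i' b a hb ha h'
      simp_all
  classical
  -- auxiliary colourings into a big type
  set C : Type := Sum (Fin r → Bool) (Sum (Fin r) (Fin r)) with hC
  let color₁ : Fin r → C := fun i =>
    if h : ∃ j, P i j = false then Sum.inl (fun i' => P i' h.choose)
    else Sum.inr (Sum.inl i)
  let color₂ : Fin r → C := fun j =>
    if ∃ i, P i j = false then Sum.inl (fun i => P i j)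
    else Sum.inr (Sum.inr j)
  have key : ∀ i j : Fin r, color₁ i = color₂ j ↔ P i j = false := by
    intro i j
    constructor
    · intro h
      simp only [color₁, color₂] at h
      split_ifs at h with h1 h2
      · have hc := h1.choose_spec
        have := congrFun (Sum.inl.inj h) i
        exact this ▸ hc
      all_goals first
        | exact Sum.noConfusion h
        | cases h
    · intro h
      have h1 : ∃ j', P i j' = false := ⟨j, h⟩
      have h2 : ∃ i', P i' j = false := ⟨i, h⟩
      simp only [color₁, color₂, dif_pos h1, if_pos h2]
      exact congrArg Sum.inl (colEq i _ j h1.choose_spec h)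
  -- shrink colours to Fin (2r)
  refine ⟨2 * r, by omega, le_refl _, ?_⟩
  let g : Sum (Fin r) (Fin r) → C := Sum.elim color₁ color₂
  let S : Finset C := Finset.image g Finset.univ
  have hSle : S.card ≤ 2 * r := by
    calc S.card ≤ (Finset.univ : Finset (Sum (Fin r) (Fin r))).card :=
          Finset.card_image_le
      _ = 2 * r := by simp [Finset.card_univ]; omega
  have hmem₁ : ∀ i, color₁ i ∈ S := fun i =>
    Finset.mem_image.2 ⟨Sum.inl i, Finset.mem_univ _, rfl⟩
  have hmem₂ : ∀ j, color₂ j ∈ S := fun j =>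
    Finset.mem_image.2 ⟨Sum.inr j, Finset.mem_univ _, rfl⟩
  let e := S.equivFin
  refine ⟨fun i => Fin.castLE hSle (e ⟨color₁ i, hmem₁ i⟩),
          fun j => Fin.castLE hSle (e ⟨color₂ j, hmem₂ j⟩), ?_⟩
  intro i j
  simp only
  constructor
  · intro hT heq
    have hcc : color₁ i = color₂ j :=
      Subtype.ext_iff.1 (e.injective (Fin.castLE_injective hSle heq))
    rw [key] at hcc
    simp_all
  · intro hne
    cases h : P i j with
    | false =>
      exfalso
      apply hne
      have hcc : color₁ i = color₂ j := (key i j).2 h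
      exact congrArg (fun x => Fin.castLE hSle (e x)) (Subtype.ext hcc)
    | true => rfl
end

section
/- Let [m] = {0,...,m−1}, let P : [r]^k → {0,1} and P' : [r']^k → {0,1} be k-ary predicates, and let V be a finite set. Suppose there is a function f mapping each assignment A : V → [r] to an assignment f(A) : V^γ → [r'] such that for every weighted directed k-uniform hypergraph H on vertex set V and every assignment A : V → [r], Val_{H,P}(A) = Val_{γ(H),P'}(f(A)). Then for every weighted directed k-uniform hypergraph H on V and every 0 < ε < 1: if the k-partite k-fold cover γ(H) has an ε-P'-sparsifier with g hyperedges, then H has an ε-P-sparsifier with g hyperedges. -/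
/-- The value of a `k`-ary CSP instance / weighted directed `k`-uniform
hypergraph with predicate `P`, hyperedge set `E`, weights `w`, under
assignment `A`. -/
def hVal {W D : Type*} {k : ℕ} (P : (Fin k → D) → Bool) (E : Finset (Fin k → W))
    (w : (Fin k → W) → ℝ) (A : W → D) : ℝ :=
  ∑ e ∈ E, w e * (if P (fun i => A (e i)) then 1 else 0)

/-- Hyperedge set of the `k`-partite `k`-fold cover: the hyperedge
`(v₁, …, v_k)` is sent to `(v₁⁽⁰⁾, …, v_k⁽ᵏ⁻¹⁾)`, where `v⁽ⁱ⁾ = (v, i)`. -/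
def coverEdges {W : Type*} [DecidableEq W] {k : ℕ} (E : Finset (Fin k → W)) :
    Finset (Fin k → W × Fin k) :=
  E.image fun e => fun i => (e i, i)

/-- Weights of the `k`-partite `k`-fold cover:
`w^γ(v₁⁽⁰⁾, …, v_k⁽ᵏ⁻¹⁾) = w(v₁, …, v_k)`, and `0` on other tuples. -/
def coverWeight {W : Type*} {k : ℕ} (w : (Fin k → W) → ℝ) :
    (Fin k → W × Fin k) → ℝ :=
  fun f => if ∀ i, (f i).2 = i then w (fun i => (f i).1) else 0

/-- if values of `(H, P)` always equal values of `(γ(H), P')` via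
`f`, then an ε-P'-sparsifier of the `k`-partite `k`-fold cover `γ(H)` with `g`
hyperedges yields an ε-P-sparsifier of `H` with `g` hyperedges. -/
theorem stmt8 {r r' k : ℕ}
    (P : (Fin k → Fin r) → Bool) (P' : (Fin k → Fin r') → Bool)
    (V : Type) [Fintype V] [DecidableEq V]
    (f : (V → Fin r) → (V × Fin k → Fin r'))
    (hf : ∀ (E : Finset (Fin k → V)), (∀ e ∈ E, Function.Injective e) →
      ∀ w : (Fin k → V) → ℝ, (∀ e ∈ E, 0 < w e) →
      ∀ A : V → Fin r,
        hVal P E w A = hVal P' (coverEdges E) (coverWeight w) (f A))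
    (E : Finset (Fin k → V)) (hE : ∀ e ∈ E, Function.Injective e)
    (w : (Fin k → V) → ℝ) (hw : ∀ e ∈ E, 0 < w e)
    (ε : ℝ) (hε0 : 0 < ε) (hε1 : ε < 1) (g : ℕ)
    (hsp : ∃ (Eγ : Finset (Fin k → V × Fin k)) (wγ : (Fin k → V × Fin k) → ℝ),
      Eγ ⊆ coverEdges E ∧ (∀ e ∈ Eγ, 0 < wγ e) ∧ Eγ.card = g ∧
      ∀ B : V × Fin k → Fin r',
        (1 - ε) * hVal P' (coverEdges E) (coverWeight w) B ≤ hVal P' Eγ wγ B ∧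
        hVal P' Eγ wγ B ≤ (1 + ε) * hVal P' (coverEdges E) (coverWeight w) B) :
    ∃ (Eε : Finset (Fin k → V)) (wε : (Fin k → V) → ℝ),
      Eε ⊆ E ∧ (∀ e ∈ Eε, 0 < wε e) ∧ Eε.card = g ∧
      ∀ A : V → Fin r,
        (1 - ε) * hVal P E w A ≤ hVal P Eε wε A ∧
        hVal P Eε wε A ≤ (1 + ε) * hVal P E w A := by
  obtain ⟨Eγ, wγ, hsub, hpos, hcard, hval⟩ := hsp
  set φ : (Fin k → V) → (Fin k → V × Fin k) := fun e => fun i => (e i, i) with hφ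
  have hφinj : Function.Injective φ := by
    intro e1 e2 h
    funext i
    have := congrFun h i
    simpa [φ] using congrArg Prod.fst this
  set Eε : Finset (Fin k → V) := E.filter (fun e => φ e ∈ Eγ) with hEε
  set wε : (Fin k → V) → ℝ := fun e => wγ (φ e) with hwε
  have hcover : coverEdges Eε = Eγ := by
    ext b
    simp only [coverEdges, Finset.mem_image, hEε, Finset.mem_filter]
    constructor
    · rintro ⟨e, ⟨-, he⟩, rfl⟩; exact he
    · intro hb
      have := hsub hb
      simp only [coverEdges, Finset.mem_image] at this
      obtain ⟨e, heE, rfl⟩ := this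
      exact ⟨e, ⟨heE, hb⟩, rfl⟩
  have hEεsub : Eε ⊆ E := Finset.filter_subset _ _
  have hEεpos : ∀ e ∈ Eε, 0 < wε e := by
    intro e he
    rw [hEε, Finset.mem_filter] at he
    exact hpos _ he.2
  have hEεcard : Eε.card = g := by
    have : (coverEdges Eε).card = Eε.card :=
      Finset.card_image_of_injective _ hφinj
    rw [hcover, hcard] at this; omega
  refine ⟨Eε, wε, hEεsub, hEεpos, hEεcard, fun A => ?_⟩
  have key : hVal P Eε wε A = hVal P' Eγ wγ (f A) := by
    rw [hf Eε (fun e he => hE e (hEεsub he)) wε hEεpos A, hcover]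
    apply Finset.sum_congr rfl
    intro b hb
    have := hsub hb
    simp only [coverEdges, Finset.mem_image] at this
    obtain ⟨e, -, rfl⟩ := this
    simp [coverWeight, φ, wε]
  have keyE := hf E hE w hw A
  rw [key, keyE]
  exact hval (f A)
end

section
/- Let P : D^k → {0,1} be a k-ary predicate on a finite domain D that contains a singleton ℓ-cube for some 2 ≤ ℓ ≤ k. For every integer q ≥ 1, let H be a weighted directed k-uniform hypergraph on n = kq vertices V = V₁ ⊔ ... ⊔ V_k with |V_i| = q for each i, whose hyperedge set is E = {(u₁,...,u_k) : u_i ∈ V_i for all i} (so |E| = q^k), with arbitrary positive weights. Then for every 0 < ε < 1, every ε-P-sparsifier H_ε = (V, E_ε, w_ε) of H satisfies |E_ε| ≥ q^ℓ. -/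
/-- The tuple whose `m`-th coordinate is `d ⟨m⟩ (i ⟨m⟩)` for `m < ℓ`,
and `y m` for `m ≥ ℓ`. -/
def cubeTuple {D : Type*} (k ℓ : ℕ) (d : Fin ℓ → Fin 2 → D) (i : Fin ℓ → Fin 2)
    (y : Fin k → D) : Fin k → D :=
  fun m => if h : (m : ℕ) < ℓ then d ⟨m, h⟩ (i ⟨m, h⟩) else y m

/-- `P` contains a singleton `ℓ`-cube: there are two-element subdomains
`D_j = {d j 0, d j 1}`, indices `n : Fin ℓ → Fin 2`, and a permutation `σ` of
the `k` coordinate positions such that some completion `x` of the cube vertex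
given by `n` lies in the support of `P`, and every tuple of the permuted cube
form lying in the support of `P` must use the indices `n` on the cube
coordinates. -/
def containsSingletonCube {D : Type*} (k ℓ : ℕ) (P : (Fin k → D) → Bool) : Prop :=
  ∃ (d : Fin ℓ → Fin 2 → D) (n : Fin ℓ → Fin 2) (σ : Equiv.Perm (Fin k)),
    (∀ j, d j 0 ≠ d j 1) ∧
    (∃ x : Fin k → D, P (fun m => cubeTuple k ℓ d n x (σ m)) = true) ∧
    (∀ (y : Fin k → D) (i : Fin ℓ → Fin 2),
      P (fun m => cubeTuple k ℓ d i y (σ m)) = true → i = n)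

/-- if `P` contains a singleton `ℓ`-cube (`2 ≤ ℓ ≤ k`), then for
the complete `k`-partite `k`-uniform hypergraph on `kq` vertices (parts
`V_i = {i} × Fin q`, hyperedges all `(u₁, …, u_k)` with `u_i ∈ V_i`, arbitrary
positive weights), every ε-P-sparsifier has at least `q^ℓ` hyperedges. -/
theorem stmt9 {D : Type} [Fintype D] [DecidableEq D] {k ℓ : ℕ}
    (hℓ2 : 2 ≤ ℓ) (hℓk : ℓ ≤ k)
    (P : (Fin k → D) → Bool) (hcube : containsSingletonCube k ℓ P)
    (q : ℕ) (hq : 1 ≤ q)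
    (E : Finset (Fin k → Fin k × Fin q))
    (hEdef : E = Finset.univ.image
      (fun u : Fin k → Fin q => fun i : Fin k => (i, u i)))
    (w : (Fin k → Fin k × Fin q) → ℝ) (hw : ∀ e ∈ E, 0 < w e)
    (ε : ℝ) (hε0 : 0 < ε) (hε1 : ε < 1)
    (Eε : Finset (Fin k → Fin k × Fin q)) (wε : (Fin k → Fin k × Fin q) → ℝ)
    (hsub : Eε ⊆ E) (hwε : ∀ e ∈ Eε, 0 < wε e)
    (hsp : ∀ A : Fin k × Fin q → D,
      (1 - ε) * hVal P E w A ≤ hVal P Eε wε A ∧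
      hVal P Eε wε A ≤ (1 + ε) * hVal P E w A) :
    q ^ ℓ ≤ Eε.card := by
  obtain ⟨d, n, σ, hd, ⟨x, hx⟩, hsing⟩ := hcube
  -- assignment for each cube choice u
  let A : (Fin ℓ → Fin q) → (Fin k × Fin q → D) := fun u p =>
    if h : ((σ p.1 : ℕ) < ℓ) then
      (if p.2 = u ⟨σ p.1, h⟩ then d ⟨σ p.1, h⟩ (n ⟨σ p.1, h⟩)
       else d ⟨σ p.1, h⟩ (n ⟨σ p.1, h⟩ + 1))
    else x (σ p.1)
  -- witness edge for u
  let f0 : (Fin ℓ → Fin q) → Fin k → Fin q := fun u i =>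
    if h : ((σ i : ℕ) < ℓ) then u ⟨σ i, h⟩ else ⟨0, hq⟩
  have hew : ∀ u, (fun i => (i, f0 u i)) ∈ E := by
    intro u; rw [hEdef]; exact Finset.mem_image.mpr ⟨f0 u, Finset.mem_univ _, rfl⟩
  have hPw : ∀ u, P (fun m => A u (m, f0 u m)) = true := by
    intro u
    have : (fun m => A u (m, f0 u m)) = (fun m => cubeTuple k ℓ d n x (σ m)) := by
      funext m
      by_cases h : ((σ m : ℕ) < ℓ)
      · simp [A, f0, cubeTuple, h]
      · simp [A, f0, cubeTuple, h]
    rw [this]; exact hx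
  -- every satisfied edge must agree with u on cube coordinates
  have key : ∀ (u : Fin ℓ → Fin q) (e : Fin k → Fin k × Fin q), e ∈ E →
      P (fun m => A u (e m)) = true →
      ∀ j : Fin ℓ, (e (σ.symm (Fin.castLE hℓk j))).2 = u j := by
    intro u e he hP j
    rw [hEdef] at he
    obtain ⟨f, -, rfl⟩ := Finset.mem_image.mp he
    set i_f : Fin ℓ → Fin 2 := fun j =>
      if f (σ.symm (Fin.castLE hℓk j)) = u j then n j else n j + 1 with hif
    have heq : (fun m => A u ((fun i => (i, f i)) m)) =
        (fun m => cubeTuple k ℓ d i_f x (σ m)) := by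
      funext m
      by_cases h : ((σ m : ℕ) < ℓ)
      · have hc : Fin.castLE hℓk ⟨(σ m : ℕ), h⟩ = σ m := by ext; rfl
        have hm : σ.symm (Fin.castLE hℓk ⟨(σ m : ℕ), h⟩) = m := by
          rw [hc]; exact σ.symm_apply_apply m
        simp only [A, cubeTuple, dif_pos h, i_f, hm]
        by_cases hf : f m = u ⟨(σ m : ℕ), h⟩ <;> simp [hf]
      · simp [A, cubeTuple, h]
    rw [heq] at hP
    have hin := hsing x i_f hP
    have hij : i_f j = n j := by rw [hin]
    by_contra hne
    rw [hif] at hij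
    simp only [if_neg hne] at hij
    exact absurd hij (by omega)
  -- each assignment has positive value on E
  have hposE : ∀ u, 0 < hVal P E w (A u) := by
    intro u
    have h1 : ∀ e ∈ E, 0 ≤ w e * (if P (fun i => A u (e i)) then 1 else 0) := by
      intro e he
      exact mul_nonneg (hw e he).le (by split <;> norm_num)
    have h2 := Finset.single_le_sum h1 (hew u)
    have h3 : w (fun i => (i, f0 u i)) *
        (if P (fun m => A u ((fun i => (i, f0 u i)) m)) then 1 else 0)
        = w (fun i => (i, f0 u i)) := by
      rw [if_pos (hPw u), mul_one]
    rw [h3] at h2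
    exact lt_of_lt_of_le (hw _ (hew u)) h2
  -- hence some edge in Eε is satisfied
  have hexists : ∀ u, ∃ e ∈ Eε, P (fun m => A u (e m)) = true := by
    intro u
    have hpos : 0 < hVal P Eε wε (A u) := by
      have := (hsp (A u)).1
      nlinarith [hposE u]
    have hne : hVal P Eε wε (A u) ≠ 0 := ne_of_gt hpos
    obtain ⟨e, he, hterm⟩ := Finset.exists_ne_zero_of_sum_ne_zero hne
    refine ⟨e, he, ?_⟩
    by_contra hPe
    simp only [Bool.not_eq_true] at hPe
    rw [hPe] at hterm
    simp at hterm
  choose F hF1 hF2 using hexists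
  have hinj : Function.Injective F := by
    intro u u' h
    funext j
    have h1 := key u (F u) (hsub (hF1 u)) (hF2 u) j
    have h2 := key u' (F u') (hsub (hF1 u')) (hF2 u') j
    rw [h] at h1
    exact h1.symm.trans h2
  calc q ^ ℓ = Fintype.card (Fin ℓ → Fin q) := by simp
    _ = (Finset.univ : Finset (Fin ℓ → Fin q)).card := Finset.card_univ.symm
    _ ≤ Eε.card := Finset.card_le_card_of_injOn F (fun u _ => hF1 u) hinj.injOn
end

section
/- Let P : D^k → {0,1} be a k-ary predicate on a finite domain D with nonempty support, and suppose there exists a label z ∈ D such that P(σ(x₁,...,x_{k−1},z)) = 0 for all x₁,...,x_{k−1} ∈ D and all permutations σ of the k coordinate positions (i.e., z appears in no tuple of the support of P). Then for every weighted directed k-uniform hypergraph H = (V, E, w), every 0 < ε < 1, and every ε-P-sparsifier H_ε = (V, E_ε, w_ε) of H, we have |E_ε| ≥ |E| / k!. -/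
/-- if `P : D^k → {0,1}` has nonempty support and some label
`z ∈ D` appears in no tuple of the support of `P`, then every ε-P-sparsifier
`H_ε` of any weighted directed `k`-uniform hypergraph `H = (V, E, w)` satisfies
`|E_ε| ≥ |E| / k!`. -/
theorem stmt10 {D : Type} [Fintype D] [DecidableEq D] {k : ℕ}
    (P : (Fin k → D) → Bool) (hne : ∃ t, P t = true)
    (z : D) (hz : ∀ t : Fin k → D, P t = true → ∀ i, t i ≠ z)
    (V : Type) [Fintype V] [DecidableEq V]
    (E : Finset (Fin k → V)) (hE : ∀ e ∈ E, Function.Injective e)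
    (w : (Fin k → V) → ℝ) (hw : ∀ e ∈ E, 0 < w e)
    (ε : ℝ) (hε0 : 0 < ε) (hε1 : ε < 1)
    (Eε : Finset (Fin k → V)) (wε : (Fin k → V) → ℝ)
    (hsub : Eε ⊆ E) (hwε : ∀ e ∈ Eε, 0 < wε e)
    (hsp : ∀ A : V → D,
      (1 - ε) * hVal P E w A ≤ hVal P Eε wε A ∧
      hVal P Eε wε A ≤ (1 + ε) * hVal P E w A) :
    (E.card : ℝ) / (Nat.factorial k : ℝ) ≤ (Eε.card : ℝ) := by
  classical
  obtain ⟨t, ht⟩ := hne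
  -- key: each e ∈ E has a permuted copy in Eε
  have key : ∀ e ∈ E, ∃ e' ∈ Eε, ∃ σ : Equiv.Perm (Fin k), e' = e ∘ σ := by
    intro e he
    set A : V → D := fun v => if h : ∃ i, e i = v then t h.choose else z with hA
    have hAe : ∀ i, A (e i) = t i := by
      intro i
      have h : ∃ j, e j = e i := ⟨i, rfl⟩
      have : h.choose = i := hE e he h.choose_spec
      simp [hA, dif_pos h, this]
    have hval_pos : 0 < hVal P E w A := by
      have hterm : ∀ f ∈ E, 0 ≤ w f * (if P (fun i => A (f i)) then 1 else 0) := by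
        intro f hf
        exact mul_nonneg (le_of_lt (hw f hf)) (by positivity)
      have hPe : P (fun i => A (e i)) = true := by
        have : (fun i => A (e i)) = t := funext hAe
        rw [this]; exact ht
      have : (0:ℝ) < w e * (if P (fun i => A (e i)) then 1 else 0) := by
        rw [hPe]; simpa using hw e he
      calc (0:ℝ) < w e * (if P (fun i => A (e i)) then 1 else 0) := this
        _ ≤ hVal P E w A := Finset.single_le_sum hterm he
    have hvalε_pos : 0 < hVal P Eε wε A := by
      have := (hsp A).1
      have h1 : 0 < (1 - ε) * hVal P E w A := mul_pos (by linarith) hval_pos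
      linarith
    -- find e' ∈ Eε with positive term
    have : ∃ e' ∈ Eε, (0:ℝ) < wε e' * (if P (fun i => A (e' i)) then 1 else 0) := by
      by_contra hcon
      push_neg at hcon
      have : hVal P Eε wε A ≤ 0 := Finset.sum_nonpos hcon
      linarith
    obtain ⟨e', he', hpos⟩ := this
    have hPe' : P (fun i => A (e' i)) = true := by
      by_contra h
      rw [Bool.not_eq_true] at h
      simp [h] at hpos
    refine ⟨e', he', ?_⟩
    -- each e' i lies in range of e
    have hrange : ∀ i, ∃ j, e j = e' i := by
      intro i
      by_contra h
      have : A (e' i) = z := by simp [hA, dif_neg h]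
      exact hz _ hPe' i this
    set σ : Fin k → Fin k := fun i => (hrange i).choose with hσ
    have hσe : ∀ i, e (σ i) = e' i := fun i => (hrange i).choose_spec
    have hinj : Function.Injective σ := by
      intro i j hij
      apply hE e' (hsub he')
      rw [← hσe i, ← hσe j, hij]
    have hbij : Function.Bijective σ := ⟨hinj, Finite.surjective_of_injective hinj⟩
    exact ⟨Equiv.ofBijective σ hbij, funext fun i => (hσe i).symm⟩
  -- choose map f : E → Eε
  set f : (Fin k → V) → (Fin k → V) := fun e =>
    if h : ∃ e' ∈ Eε, ∃ σ : Equiv.Perm (Fin k), e' = e ∘ σ then h.choose else e with hf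
  have hmaps : ∀ e ∈ E, f e ∈ Eε := by
    intro e he
    have h := key e he
    simp only [hf, dif_pos h]
    exact h.choose_spec.1
  have hfiber : ∀ e' ∈ Eε, (E.filter fun e => f e = e').card ≤ Nat.factorial k := by
    intro e' _
    set S : Finset (Fin k → V) :=
      Finset.image (fun π : Equiv.Perm (Fin k) => e' ∘ (π : Fin k → Fin k)) Finset.univ with hS
    have hsubset : (E.filter fun e => f e = e') ⊆ S := by
      intro e he
      rw [Finset.mem_filter] at he
      obtain ⟨heE, hfe⟩ := he
      have h := key e heE
      have hspec := h.choose_spec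
      rw [hf] at hfe
      simp only [dif_pos h] at hfe
      obtain ⟨σ, hσ⟩ := hspec.2
      rw [hfe] at hσ
      -- e' = e ∘ σ, so e = e' ∘ σ.symm
      refine Finset.mem_image.2 ⟨σ.symm, Finset.mem_univ _, ?_⟩
      funext i
      have := congrFun hσ (σ.symm i)
      simp at this
      simp [Function.comp, ← this]
    calc (E.filter fun e => f e = e').card ≤ S.card := Finset.card_le_card hsubset
      _ ≤ (Finset.univ : Finset (Equiv.Perm (Fin k))).card := Finset.card_image_le
      _ = Nat.factorial k := by simp [Fintype.card_perm]
  have hcard : E.card ≤ Nat.factorial k * Eε.card :=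
    Finset.card_le_mul_card_image_of_maps_to hmaps _ hfiber
  have hkpos : (0:ℝ) < (Nat.factorial k : ℝ) := by
    exact_mod_cast Nat.factorial_pos k
  rw [div_le_iff₀ hkpos]
  calc (E.card : ℝ) ≤ (Nat.factorial k : ℝ) * Eε.card := by exact_mod_cast hcard
    _ = Eε.card * Nat.factorial k := by ring
end

section
/- Let D be a finite domain with |D| ≥ 2, let a ∈ D, and let P : D^k → {0,1} be the k-ary predicate with support exactly {(a, a, ..., a)}. Then for every weighted directed k-uniform hypergraph H = (V, E, w), every 0 < ε < 1, and every ε-P-sparsifier H_ε = (V, E_ε, w_ε) of H, we have |E_ε| ≥ |E| / k!. -/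
/-- if `|D| ≥ 2` and `P : D^k → {0,1}` is the singleton predicate
whose support is exactly `{(a, a, …, a)}`, then every ε-P-sparsifier `H_ε` of
any weighted directed `k`-uniform hypergraph `H = (V, E, w)` satisfies
`|E_ε| ≥ |E| / k!`. -/
theorem stmt11 {D : Type} [Fintype D] [DecidableEq D] (hD : 2 ≤ Fintype.card D)
    {k : ℕ} (a : D)
    (P : (Fin k → D) → Bool) (hP : ∀ t : Fin k → D, P t = true ↔ t = fun _ => a)
    (V : Type) [Fintype V] [DecidableEq V]
    (E : Finset (Fin k → V)) (hE : ∀ e ∈ E, Function.Injective e)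
    (w : (Fin k → V) → ℝ) (hw : ∀ e ∈ E, 0 < w e)
    (ε : ℝ) (hε0 : 0 < ε) (hε1 : ε < 1)
    (Eε : Finset (Fin k → V)) (wε : (Fin k → V) → ℝ)
    (hsub : Eε ⊆ E) (hwε : ∀ e ∈ Eε, 0 < wε e)
    (hsp : ∀ A : V → D,
      (1 - ε) * hVal P E w A ≤ hVal P Eε wε A ∧
      hVal P Eε wε A ≤ (1 + ε) * hVal P E w A) :
    (E.card : ℝ) / (Nat.factorial k : ℝ) ≤ (Eε.card : ℝ) := by
  classical
  obtain ⟨b, hb⟩ : ∃ b : D, b ≠ a := Fintype.exists_ne_of_one_lt_card hD a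
  -- key: for each edge of `E` there is an edge of `Eε` with the same image
  have key : ∀ e ∈ E, ∃ e' ∈ Eε,
      Finset.image e' Finset.univ = Finset.image e Finset.univ := by
    intro e he
    set A : V → D := fun v => if v ∈ Finset.image e Finset.univ then a else b with hA
    have hAe : ∀ i, A (e i) = a := by
      intro i
      simp only [hA]
      exact if_pos (Finset.mem_image_of_mem e (Finset.mem_univ i))
    have hPe : P (fun i => A (e i)) = true := (hP _).2 (funext hAe)
    have h1 : w e ≤ hVal P E w A := by
      have := Finset.single_le_sum
        (f := fun g => w g * (if P (fun i => A (g i)) then (1:ℝ) else 0))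
        (fun g hg => mul_nonneg (le_of_lt (hw g hg)) (by split <;> norm_num)) he
      simpa [hVal, hPe] using this
    have hpos : 0 < hVal P E w A := lt_of_lt_of_le (hw e he) h1
    have hpos2 : 0 < hVal P Eε wε A :=
      lt_of_lt_of_le (mul_pos (by linarith) hpos) (hsp A).1
    have hne : hVal P Eε wε A ≠ 0 := ne_of_gt hpos2
    rw [hVal] at hne
    obtain ⟨e', he', hne'⟩ := Finset.exists_ne_zero_of_sum_ne_zero hne
    have hPtrue : P (fun i => A (e' i)) = true := by
      by_contra h
      simp [h] at hne'
    have hcf : ∀ i, A (e' i) = a := fun i => congrFun ((hP _).1 hPtrue) i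
    have hmem : ∀ i, e' i ∈ Finset.image e Finset.univ := by
      intro i
      by_contra hm
      have h2 : A (e' i) = b := by simp only [hA]; exact if_neg hm
      exact hb (h2 ▸ hcf i)
    have hsubimg : Finset.image e' Finset.univ ⊆ Finset.image e Finset.univ := by
      intro v hv
      obtain ⟨i, -, rfl⟩ := Finset.mem_image.1 hv
      exact hmem i
    exact ⟨e', he', Finset.eq_of_subset_of_card_le hsubimg (by
      rw [Finset.card_image_of_injective _ (hE e he),
        Finset.card_image_of_injective _ (hE e' (hsub he'))])⟩
  set f : (Fin k → V) → (Fin k → V) :=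
    fun e => if h : e ∈ E then (key e h).choose else e with hfdef
  have hf1 : ∀ e ∈ E, f e ∈ Eε := by
    intro e he
    simp only [hfdef, dif_pos he]
    exact (key e he).choose_spec.1
  have hf2 : ∀ e ∈ E, Finset.image (f e) Finset.univ = Finset.image e Finset.univ := by
    intro e he
    simp only [hfdef, dif_pos he]
    exact (key e he).choose_spec.2
  -- count injective functions `Fin k → Fin k`
  have hcardt : (Finset.univ.filter
      (fun φ : Fin k → Fin k => Function.Injective φ)).card = k.factorial := by
    rw [← Fintype.card_subtype]
    rw [Fintype.card_congr (Equiv.subtypeInjectiveEquivEmbedding (Fin k) (Fin k))]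
    rw [Fintype.card_embedding_eq]
    simp [Nat.descFactorial_self]
  -- every fiber of `f` has at most `k!` elements
  have hfiber : ∀ c ∈ Finset.image f E,
      (E.filter (fun g => f g = c)).card ≤ k.factorial := by
    intro c hc
    obtain ⟨e0, he0, rfl⟩ := Finset.mem_image.1 hc
    have hinj0 : Function.Injective (f e0) := hE _ (hsub (hf1 e0 he0))
    set Φ : (Fin k → V) → (Fin k → Fin k) :=
      fun g i => if h : ∃ j, (f e0) j = g i then h.choose else i with hΦdef
    have hΦspec : ∀ g i (h : ∃ j, f e0 j = g i), f e0 (Φ g i) = g i := by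
      intro g i h
      simp only [hΦdef, dif_pos h]
      exact h.choose_spec
    have hex : ∀ g ∈ E.filter (fun g => f g = f e0), ∀ i, ∃ j, f e0 j = g i := by
      intro g hg i
      rw [Finset.mem_filter] at hg
      have himg : g i ∈ Finset.image (f e0) Finset.univ := by
        rw [← hg.2, hf2 g hg.1]
        exact Finset.mem_image_of_mem g (Finset.mem_univ i)
      obtain ⟨j, -, hj⟩ := Finset.mem_image.1 himg
      exact ⟨j, hj⟩
    rw [← hcardt]
    apply Finset.card_le_card_of_injOn Φ
    · intro g hg
      rw [Finset.mem_coe, Finset.mem_filter]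
      refine ⟨Finset.mem_univ _, ?_⟩
      intro i i' hii
      have hgE : g ∈ E := (Finset.mem_filter.1 hg).1
      apply hE g hgE
      rw [← hΦspec g i (hex g hg i), ← hΦspec g i' (hex g hg i'), hii]
    · intro g hg g' hg' hgg
      funext i
      have h1 := hΦspec g i (hex g (by simpa using hg) i)
      have h2 := hΦspec g' i (hex g' (by simpa using hg') i)
      rw [← h1, ← h2, congrFun hgg i]
  have hmain : E.card ≤ k.factorial * Eε.card := by
    calc E.card ≤ k.factorial * (Finset.image f E).card :=
          Finset.card_le_mul_card_image E k.factorial hfiber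
      _ ≤ k.factorial * Eε.card := by
          apply Nat.mul_le_mul_left
          apply Finset.card_le_card
          intro c hc
          obtain ⟨e0, he0, rfl⟩ := Finset.mem_image.1 hc
          exact hf1 e0 he0
  have hkpos : (0:ℝ) < (k.factorial : ℝ) := by
    exact_mod_cast Nat.factorial_pos k
  rw [div_le_iff₀ hkpos]
  calc (E.card : ℝ) ≤ (k.factorial : ℝ) * (Eε.card : ℝ) := by exact_mod_cast hmain
    _ = (Eε.card : ℝ) * (k.factorial : ℝ) := mul_comm _ _
end

section
/- Let [r] = {0,...,r−1} with r ≥ 2, let P : [r]^k → {0,1} be a singleton predicate with support {(a₁,...,a_k)}, and let nOr : [r]^k → {0,1} be the predicate with support {(0,...,0)}. Then for every weighted directed k-uniform hypergraph H on a finite vertex set V and every 0 < ε < 1: if the k-partite k-fold cover γ(H) has an ε-P-sparsifier with g hyperedges, then H has an ε-nOr-sparsifier with g hyperedges. -/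
/-- let `P : [r]^k → {0,1}` (with `r ≥ 2`) be the singleton
predicate with support `{(a₁, …, a_k)}` and `nOr` the predicate with support
`{(0, …, 0)}`. If the `k`-partite `k`-fold cover `γ(H)` of a weighted directed
`k`-uniform hypergraph `H` has an ε-P-sparsifier with `g` hyperedges, then `H`
has an ε-nOr-sparsifier with `g` hyperedges. -/
theorem stmt12 {r k : ℕ} (hr : 2 ≤ r)
    (P nOr : (Fin k → Fin r) → Bool) (a : Fin k → Fin r)
    (hP : ∀ t : Fin k → Fin r, P t = true ↔ t = a)
    (hnOr : ∀ t : Fin k → Fin r, nOr t = true ↔ ∀ i, (t i : ℕ) = 0)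
    (V : Type) [Fintype V] [DecidableEq V]
    (E : Finset (Fin k → V)) (hE : ∀ e ∈ E, Function.Injective e)
    (w : (Fin k → V) → ℝ) (hw : ∀ e ∈ E, 0 < w e)
    (ε : ℝ) (hε0 : 0 < ε) (hε1 : ε < 1) (g : ℕ)
    (hsp : ∃ (Eγ : Finset (Fin k → V × Fin k)) (wγ : (Fin k → V × Fin k) → ℝ),
      Eγ ⊆ coverEdges E ∧ (∀ e ∈ Eγ, 0 < wγ e) ∧ Eγ.card = g ∧
      ∀ B : V × Fin k → Fin r,
        (1 - ε) * hVal P (coverEdges E) (coverWeight w) B ≤ hVal P Eγ wγ B ∧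
        hVal P Eγ wγ B ≤ (1 + ε) * hVal P (coverEdges E) (coverWeight w) B) :
    ∃ (Eε : Finset (Fin k → V)) (wε : (Fin k → V) → ℝ),
      Eε ⊆ E ∧ (∀ e ∈ Eε, 0 < wε e) ∧ Eε.card = g ∧
      ∀ A : V → Fin r,
        (1 - ε) * hVal nOr E w A ≤ hVal nOr Eε wε A ∧
        hVal nOr Eε wε A ≤ (1 + ε) * hVal nOr E w A := by
  classical
  obtain ⟨Eγ, wγ, hsub, hpos, hcard, hbound⟩ := hsp
  set φ : (Fin k → V) → (Fin k → V × Fin k) := fun e i => (e i, i) with hφ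
  have hφinj : Function.Injective φ := by
    intro e₁ e₂ h
    funext i
    have := congrFun h i
    simpa [φ, Prod.ext_iff] using this
  set Eε : Finset (Fin k → V) := E.filter (fun e => φ e ∈ Eγ) with hEε
  have hEγ : Eγ = Eε.image φ := by
    ext f
    simp only [Finset.mem_image, hEε, Finset.mem_filter]
    constructor
    · intro hf
      obtain ⟨e, he, rfl⟩ := Finset.mem_image.mp (hsub hf)
      exact ⟨e, ⟨he, hf⟩, rfl⟩
    · rintro ⟨e, ⟨he, hf⟩, rfl⟩; exact hf
  have h0r : 0 < r := by omega
  have h1r : 1 < r := by omega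
  refine ⟨Eε, fun e => wγ (φ e), Finset.filter_subset _ _, ?_, ?_, ?_⟩
  · intro e he; exact hpos _ ((Finset.mem_filter.mp he).2)
  · rw [← hcard, hEγ, Finset.card_image_of_injective _ hφinj]
  intro A
  set b : Fin k → Fin r := fun i => if a i = ⟨0, h0r⟩ then ⟨1, h1r⟩ else ⟨0, h0r⟩ with hbdef
  have hb : ∀ i, b i ≠ a i := by
    intro i
    by_cases h : a i = ⟨0, h0r⟩
    · rw [hbdef]; simp only [h, if_pos]
      exact Fin.ne_of_val_ne (by simp)
    · rw [hbdef]; simp only [if_neg h]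
      exact fun hc => h hc.symm
  set B : V × Fin k → Fin r := fun p => if (A p.1 : ℕ) = 0 then a p.2 else b p.2 with hBdef
  have key : ∀ e : Fin k → V,
      (if P (fun i => B (e i, i)) then (1:ℝ) else 0) =
      (if nOr (fun i => A (e i)) then (1:ℝ) else 0) := by
    intro e
    by_cases hall : ∀ i, (A (e i) : ℕ) = 0
    · have hPt : P (fun i => B (e i, i)) = true := by
        rw [hP]; funext i; simp [hBdef, hall i]
      have hNt : nOr (fun i => A (e i)) = true := (hnOr _).mpr hall
      rw [hPt, hNt]
    · push_neg at hall
      obtain ⟨i, hi⟩ := hall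
      have hPt : P (fun i => B (e i, i)) ≠ true := by
        intro hc; rw [hP] at hc
        have := congrFun hc i
        simp only [hBdef, if_neg hi] at this
        exact hb i this
      have hNt : nOr (fun i => A (e i)) ≠ true := by
        intro hc; rw [hnOr] at hc; exact hi (hc i)
      simp [hPt, hNt]
  have hsum : ∀ (S : Finset (Fin k → V)) (u : (Fin k → V × Fin k) → ℝ),
      hVal P (S.image φ) u B = ∑ e ∈ S, u (φ e) * (if nOr (fun i => A (e i)) then (1:ℝ) else 0) := by
    intro S u
    rw [hVal, Finset.sum_image (fun x _ y _ h => hφinj h)]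
    refine Finset.sum_congr rfl fun e _ => ?_
    rw [← key e]
  have hcw : ∀ e : Fin k → V, coverWeight w (φ e) = w e := by
    intro e
    rw [coverWeight]
    simp [φ]
  have hfull : hVal P (coverEdges E) (coverWeight w) B = hVal nOr E w A := by
    rw [coverEdges, hsum E (coverWeight w)]
    exact Finset.sum_congr rfl fun e _ => by rw [hcw]
  have hsp : hVal P Eγ wγ B = hVal nOr Eε (fun e => wγ (φ e)) A := by
    rw [hEγ, hsum Eε wγ]; rfl
  have := hbound B
  rw [hfull, hsp] at this
  exact this
end

section
/- Let [r] = {0,...,r−1} with r ≥ 2, let P : [r]^k → {0,1} be a singleton predicate with support {(a₁,...,a_k)}, and let nOr : [r]^k → {0,1} be the predicate with support {(0,...,0)}. For an assignment A : V → [r], define the assignment A^γ on the vertex set V^γ of the k-partite k-fold cover by A^γ(v^(i)) = A(v) + a_{i+1} (mod r) for i = 0,...,k−1. Then for every weighted directed k-uniform hypergraph H on V, Val_{H,nOr}(A) = Val_{γ(H),P}(A^γ). -/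
/-- let `P : [r]^k → {0,1}` (with `r ≥ 2`) be the singleton
predicate with support `{(a₁, …, a_k)}` and `nOr` the predicate with support
`{(0, …, 0)}`. For an assignment `A : V → [r]`, define `A^γ` on the vertices
`(v, i)` of the `k`-partite `k`-fold cover by `A^γ(v⁽ⁱ⁾) = A(v) + aᵢ (mod r)`.
Then for every weighted directed `k`-uniform hypergraph `H` on `V`,
`Val_{H,nOr}(A) = Val_{γ(H),P}(A^γ)`. -/
theorem stmt13 {r k : ℕ} (hr : 2 ≤ r)
    (P nOr : (Fin k → Fin r) → Bool) (a : Fin k → Fin r)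
    (hP : ∀ t : Fin k → Fin r, P t = true ↔ t = a)
    (hnOr : ∀ t : Fin k → Fin r, nOr t = true ↔ ∀ i, (t i : ℕ) = 0)
    (V : Type) [Fintype V] [DecidableEq V]
    (E : Finset (Fin k → V)) (hE : ∀ e ∈ E, Function.Injective e)
    (w : (Fin k → V) → ℝ) (hw : ∀ e ∈ E, 0 < w e)
    (A : V → Fin r) :
    hVal nOr E w A =
      hVal P (coverEdges E) (coverWeight w) (fun p => A p.1 + a p.2) := by
  haveI : NeZero r := ⟨by omega⟩
  unfold hVal coverEdges coverWeight
  rw [Finset.sum_image (by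
    intro e _ e' _ h
    funext i
    have := congrFun h i
    exact (Prod.mk.injEq _ _ _ _).mp this |>.1)]
  refine Finset.sum_congr rfl fun e _ => ?_
  rw [if_pos (fun i => rfl : ∀ i : Fin k, ((fun i => (e i, i)) i).2 = i)]
  congr 1
  have : P (fun i => A (e i) + a i) = nOr (fun i => A (e i)) := by
    by_cases h : ∀ i, (A (e i) : ℕ) = 0
    · have h1 : P (fun i => A (e i) + a i) = true := by
        rw [hP]; funext i
        have : A (e i) = 0 := Fin.ext (by simpa using h i)
        simp [this]
      rw [h1, ((hnOr _).mpr h)]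
    · have h1 : P (fun i => A (e i) + a i) = false := by
        rw [Bool.eq_false_iff]
        intro hc
        rw [hP] at hc
        apply h
        intro i
        have h3 := congrFun hc i
        have h4 : A (e i) = 0 := by
          have := add_right_cancel (b := a i) (by simpa using h3 : A (e i) + a i = 0 + a i)
          exact this
        simp [h4]
      have h2 : nOr (fun i => A (e i)) = false := by
        rw [Bool.eq_false_iff]; intro hc; exact h ((hnOr _).mp hc)
      rw [h1, h2]
  rw [this]
end

section
/- Let D be a finite domain with |D| ≥ 2 and let P : D^k → {0,1} be a singleton predicate (its support has exactly one element). Then P contains a singleton k-cube; consequently, for every integer q ≥ 1 the complete k-partite k-uniform hypergraph H on kq vertices V = V₁ ⊔ ... ⊔ V_k with |V_i| = q and hyperedge set {(u₁,...,u_k) : u_i ∈ V_i}, with arbitrary positive weights, has the property that for every 0 < ε < 1 every ε-P-sparsifier H_ε = (V, E_ε, w_ε) of H satisfies |E_ε| ≥ q^k. -/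
/-- a singleton predicate `P : D^k → {0,1}` on a domain with
`|D| ≥ 2` contains a singleton `k`-cube; consequently, for the complete
`k`-partite `k`-uniform hypergraph on `kq` vertices (parts `V_i = {i} × Fin q`,
hyperedges all `(u₁, …, u_k)` with `u_i ∈ V_i`, arbitrary positive weights),
every ε-P-sparsifier has at least `q^k` hyperedges. -/
theorem stmt14 {D : Type} [Fintype D] [DecidableEq D] (hD : 2 ≤ Fintype.card D)
    {k : ℕ} (P : (Fin k → D) → Bool)
    (hsing : ∃ a : Fin k → D, ∀ t : Fin k → D, P t = true ↔ t = a) :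
    containsSingletonCube k k P ∧
    ∀ q : ℕ, 1 ≤ q →
      ∀ (E : Finset (Fin k → Fin k × Fin q)),
        E = Finset.univ.image
          (fun u : Fin k → Fin q => fun i : Fin k => (i, u i)) →
      ∀ (w : (Fin k → Fin k × Fin q) → ℝ), (∀ e ∈ E, 0 < w e) →
      ∀ ε : ℝ, 0 < ε → ε < 1 →
      ∀ (Eε : Finset (Fin k → Fin k × Fin q)) (wε : (Fin k → Fin k × Fin q) → ℝ),
        Eε ⊆ E → (∀ e ∈ Eε, 0 < wε e) →
        (∀ A : Fin k × Fin q → D,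
          (1 - ε) * hVal P E w A ≤ hVal P Eε wε A ∧
          hVal P Eε wε A ≤ (1 + ε) * hVal P E w A) →
        q ^ k ≤ Eε.card := by

  obtain ⟨a, ha⟩ := hsing
  have hb : ∀ j : Fin k, ∃ bj : D, bj ≠ a j :=
    fun j => Fintype.exists_ne_of_one_lt_card (by omega) (a j)
  choose b hbne using hb
  constructor
  · refine ⟨fun j => ![a j, b j], fun _ => 0, Equiv.refl _, ?_, ?_, ?_⟩
    · intro j
      simp only [Matrix.cons_val_zero, Matrix.cons_val_one, Matrix.head_cons]
      exact fun h => hbne j h.symm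
    · refine ⟨a, ?_⟩
      rw [ha]
      funext m
      simp [cubeTuple]
    · intro y i hP
      rw [ha] at hP
      funext j
      have hj := congrFun hP j
      simp only [Equiv.refl_apply, cubeTuple, j.isLt, dif_pos, Fin.eta] at hj
      have h2 := (i j).isLt
      rcases (by omega : (i j : ℕ) = 0 ∨ (i j : ℕ) = 1) with h0 | h1
      · exact Fin.ext h0
      · exfalso
        have : i j = 1 := Fin.ext h1
        rw [this] at hj
        simp only [Matrix.cons_val_one, Matrix.head_cons, dif_pos j.isLt, Matrix.cons_val_zero] at hj
        exact hbne j (by simpa using hj)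
  · intro q hq E hE w hw ε hε0 hε1 Eε wε hsub hwε hsp
    subst hE
    have hinj : Function.Injective
        (fun u : Fin k → Fin q => fun i : Fin k => (i, u i)) := by
      intro u v h
      funext i
      have := congrFun h i
      simpa using this
    have hsubE : Finset.univ.image
        (fun u : Fin k → Fin q => fun i : Fin k => (i, u i)) ⊆ Eε := by
      intro e he
      obtain ⟨u, -, rfl⟩ := Finset.mem_image.mp he
      set A : Fin k × Fin q → D := fun p => if p.2 = u p.1 then a p.1 else b p.1 with hA
      have hind : ∀ v : Fin k → Fin q,
          (P (fun i => A ((i, v i))) = true) ↔ v = u := by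
        intro v
        rw [ha]
        constructor
        · intro h
          funext i
          have := congrFun h i
          simp only [hA] at this
          by_contra hne
          rw [if_neg hne] at this
          exact hbne i this
        · rintro rfl
          funext i
          simp [hA]
      have heu : (fun u : Fin k → Fin q => fun i : Fin k => (i, u i)) u ∈
          Finset.univ.image (fun u : Fin k → Fin q => fun i : Fin k => (i, u i)) :=
        Finset.mem_image_of_mem _ (Finset.mem_univ u)
      have hvalE : 0 < hVal P (Finset.univ.image
          (fun u : Fin k → Fin q => fun i : Fin k => (i, u i))) w A := by
        unfold hVal
        apply Finset.sum_pos'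
        · intro e' he'
          have := hw e' he'
          positivity
        · refine ⟨_, heu, ?_⟩
          have : P (fun i => A ((i, u i))) = true := (hind u).mpr rfl
          simp only [this, if_pos]
          simpa using hw _ heu
      have hvalEε : 0 < hVal P Eε wε A := by
        have h1 := (hsp A).1
        have : 0 < (1 - ε) * hVal P (Finset.univ.image
            (fun u : Fin k → Fin q => fun i : Fin k => (i, u i))) w A := by
          apply mul_pos (by linarith) hvalE
        linarith
      by_contra hnot
      have hzero : hVal P Eε wε A = 0 := by
        unfold hVal
        apply Finset.sum_eq_zero
        intro e' he'
        obtain ⟨v, -, rfl⟩ := Finset.mem_image.mp (hsub he')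
        have hvne : v ≠ u := by
          rintro rfl
          exact hnot he'
        have : ¬ (P (fun i => A ((i, v i))) = true) := fun h => hvne ((hind v).mp h)
        simp [this]
      rw [hzero] at hvalEε
      exact lt_irrefl 0 hvalEε
    calc q ^ k = (Finset.univ.image
          (fun u : Fin k → Fin q => fun i : Fin k => (i, u i))).card := by
          rw [Finset.card_image_of_injective _ hinj, Finset.card_univ]
          simp [Fintype.card_fun]
      _ ≤ Eε.card := Finset.card_le_card hsubE
end

section
/- Let r ≥ 2, k ≥ 3, and let Par : [r]^k → {0,1} be the k-ary parity predicate defined by Par(x₁,...,x_k) = 1 if and only if x₁ + ... + x_k ≡ 0 (mod 2), where [r] = {0,...,r−1}. Then for every ℓ with 2 ≤ ℓ ≤ k, Par does not contain a singleton ℓ-cube. -/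
/-- The `k`-ary parity predicate on `[r]`: `Par(x₁, …, x_k) = 1` iff
`x₁ + ⋯ + x_k ≡ 0 (mod 2)`. -/
def parityPred (r k : ℕ) : (Fin k → Fin r) → Bool :=
  fun t => decide ((∑ i, (t i : ℕ)) % 2 = 0)

lemma cube_sum_decomp {r k ℓ : ℕ} (hℓ : ℓ ≤ k) (d : Fin ℓ → Fin 2 → Fin r)
    (i : Fin ℓ → Fin 2) (y : Fin k → Fin r) :
    (∑ m : Fin k, (((cubeTuple k ℓ d i y m : Fin r) : ℕ) : ZMod 2)) =
      (∑ j : Fin ℓ, ((d j (i j) : ℕ) : ZMod 2)) +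
        ∑ m ∈ Finset.univ.filter (fun m : Fin k => ¬ (m : ℕ) < ℓ), ((y m : ℕ) : ZMod 2) := by
  rw [← Finset.sum_filter_add_sum_filter_not Finset.univ (fun m : Fin k => (m : ℕ) < ℓ)]
  congr 1
  · have hset : Finset.univ.filter (fun m : Fin k => (m : ℕ) < ℓ) =
        Finset.univ.map (Fin.castLEEmb hℓ) := by
      ext m
      simp [Fin.castLEEmb, Fin.castLE]
      constructor
      · intro hm; exact ⟨⟨m, hm⟩, rfl⟩
      · rintro ⟨j, rfl⟩; exact j.isLt
    rw [hset, Finset.sum_map]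
    apply Finset.sum_congr rfl
    intro j _
    simp [cubeTuple, Fin.castLEEmb, Fin.castLE]
  · apply Finset.sum_congr rfl
    intro m hm
    simp only [Finset.mem_filter] at hm
    simp [cubeTuple, hm.2]

lemma parity_true_iff {r k : ℕ} (t : Fin k → Fin r) :
    parityPred r k t = true ↔ (∑ m : Fin k, (((t m : ℕ) : ZMod 2))) = 0 := by
  have h2 : ∀ s : ℕ, s % 2 = 0 ↔ ((s : ZMod 2) = 0) := by
    intro s; rw [ZMod.natCast_eq_zero_iff, Nat.dvd_iff_mod_eq_zero]
  rw [parityPred, decide_eq_true_iff, h2, Nat.cast_sum]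

/-- for `r ≥ 2` and `k ≥ 3`, the `k`-ary parity predicate on
`[r]` does not contain a singleton `ℓ`-cube for any `2 ≤ ℓ ≤ k`. -/
theorem stmt15 {r k : ℕ} (hr : 2 ≤ r) (hk : 3 ≤ k) :
    ∀ ℓ : ℕ, 2 ≤ ℓ → ℓ ≤ k → ¬ containsSingletonCube k ℓ (parityPred r k) := by
  intro ℓ hℓ2 hℓk
  rintro ⟨d, n, σ, hd, ⟨x, hx⟩, huniq⟩
  -- abbreviations
  set C : ZMod 2 :=
    ∑ m ∈ Finset.univ.filter (fun m : Fin k => ¬ (m : ℕ) < ℓ), ((x m : ℕ) : ZMod 2) with hC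
  have key : ∀ i : Fin ℓ → Fin 2,
      parityPred r k (fun m => cubeTuple k ℓ d i x (σ m)) = true ↔
        (∑ j : Fin ℓ, ((d j (i j) : ℕ) : ZMod 2)) + C = 0 := by
    intro i
    rw [parity_true_iff]
    rw [show (∑ m : Fin k, (((cubeTuple k ℓ d i x (σ m) : Fin r) : ℕ) : ZMod 2))
        = ∑ m : Fin k, (((cubeTuple k ℓ d i x m : Fin r) : ℕ) : ZMod 2) from
      Equiv.sum_comp σ (fun m => (((cubeTuple k ℓ d i x m : Fin r) : ℕ) : ZMod 2))]
    rw [cube_sum_decomp hℓk]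
  have hn := (key n).mp hx
  -- flipping helper: applying huniq to a flipped i
  have flip_ne : ∀ b : Fin 2, b + 1 ≠ b := by decide
  by_cases hA : ∃ j : Fin ℓ, ((d j 0 : ℕ) : ZMod 2) = ((d j 1 : ℕ) : ZMod 2)
  · obtain ⟨j, hj⟩ := hA
    set i := Function.update n j (n j + 1) with hi
    have hdj : ∀ a b : Fin 2, ((d j a : ℕ) : ZMod 2) = ((d j b : ℕ) : ZMod 2) := by
      intro a b
      fin_cases a <;> fin_cases b <;> first | rfl | exact hj | exact hj.symm
    have hsum : (∑ j' : Fin ℓ, ((d j' (i j') : ℕ) : ZMod 2))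
        = ∑ j' : Fin ℓ, ((d j' (n j') : ℕ) : ZMod 2) := by
      apply Finset.sum_congr rfl
      intro j' _
      by_cases h : j' = j
      · subst h; exact hdj _ _
      · rw [hi, Function.update_of_ne h]
    have : i = n := huniq x i ((key i).mpr (by rw [hsum]; exact hn))
    have : i j = n j := by rw [this]
    rw [hi, Function.update_self] at this
    exact flip_ne _ this
  · push_neg at hA
    have hone : ∀ (j : Fin ℓ) (b : Fin 2),
        ((d j (b + 1) : ℕ) : ZMod 2) - ((d j b : ℕ) : ZMod 2) = 1 := by
      intro j b
      have := hA j
      have key2 : ∀ a c : ZMod 2, a ≠ c → a - c = 1 ∧ c - a = 1 := by decide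
      fin_cases b
      · simpa using (key2 _ _ this).2
      · simpa using (key2 _ _ this).1
    set j0 : Fin ℓ := ⟨0, by omega⟩
    set j1 : Fin ℓ := ⟨1, by omega⟩
    have hj01 : j0 ≠ j1 := by simp [j0, j1, Fin.ext_iff]
    set i := Function.update (Function.update n j0 (n j0 + 1)) j1 (n j1 + 1) with hi
    have hival : ∀ j' : Fin ℓ, j' ≠ j0 → j' ≠ j1 → i j' = n j' := by
      intro j' h0 h1
      rw [hi, Function.update_of_ne h1, Function.update_of_ne h0]
    have hij0 : i j0 = n j0 + 1 := by
      rw [hi, Function.update_of_ne hj01, Function.update_self]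
    have hij1 : i j1 = n j1 + 1 := by rw [hi, Function.update_self]
    have hsum : (∑ j' : Fin ℓ, ((d j' (i j') : ℕ) : ZMod 2))
        = ∑ j' : Fin ℓ, ((d j' (n j') : ℕ) : ZMod 2) := by
      have hd : (∑ j' : Fin ℓ, (((d j' (i j') : ℕ) : ZMod 2) - ((d j' (n j') : ℕ) : ZMod 2))) = 0 := by
        rw [← Finset.sum_subset (Finset.subset_univ ({j0, j1} : Finset (Fin ℓ)))]
        · rw [Finset.sum_pair hj01, hij0, hij1, hone, hone]
          decide
        · intro j' _ hj'
          simp only [Finset.mem_insert, Finset.mem_singleton, not_or] at hj'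
          rw [hival j' hj'.1 hj'.2, sub_self]
      rw [Finset.sum_sub_distrib] at hd
      linear_combination hd
    have : i = n := huniq x i ((key i).mpr (by rw [hsum]; exact hn))
    have : i j0 = n j0 := by rw [this]
    rw [hij0] at this
    exact flip_ne _ this
end

section
/- Let D be a finite domain with |D| ≥ 2 and let P : D^k → {0,1} be a k-ary predicate with nonempty support. Suppose there exists a label z ∈ D that appears in no tuple of the support of P (i.e., every tuple (x₁,...,x_k) with P(x₁,...,x_k) = 1 satisfies x_i ≠ z for all i). Then P contains a singleton k-cube. -/
/-- if `|D| ≥ 2`, `P : D^k → {0,1}` has nonempty support and some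
label `z ∈ D` appears in no tuple of the support of `P`, then `P` contains a
singleton `k`-cube. -/
theorem stmt16 {D : Type} [Fintype D] [DecidableEq D] (hD : 2 ≤ Fintype.card D)
    {k : ℕ} (P : (Fin k → D) → Bool) (hne : ∃ t, P t = true)
    (z : D) (hz : ∀ t : Fin k → D, P t = true → ∀ i, t i ≠ z) :
    containsSingletonCube k k P := by
  obtain ⟨t, ht⟩ := hne
  refine ⟨fun j b => if b = 0 then z else t j, fun _ => 1, 1, ?_, ?_, ?_⟩
  · intro j
    simp only [if_pos rfl]
    intro h
    exact (hz t ht j) (by simpa using h.symm)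
  · refine ⟨t, ?_⟩
    convert ht using 2
    funext m
    simp [cubeTuple, m.2, Fin.eta]
  · intro y i hPy
    funext j
    by_contra hne'
    have hij : i j = 0 := by omega
    have := hz _ hPy j
    apply this
    simp [cubeTuple, j.2, Fin.eta, hij]
end

section
/- Let P : {0,1}³ → {0,1} be the ternary Boolean predicate with support exactly {(0,0,0), (0,0,1)}. Then P contains a singleton 2-cube; consequently, for every integer q ≥ 1 the complete 3-partite 3-uniform hypergraph H on 3q vertices V = V₁ ⊔ V₂ ⊔ V₃ with |V_i| = q and hyperedge set {(u₁,u₂,u₃) : u_i ∈ V_i}, with arbitrary positive weights, has the property that for every 0 < ε < 1 every ε-P-sparsifier H_ε = (V, E_ε, w_ε) of H satisfies |E_ε| ≥ q². -/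
/-- the ternary Boolean predicate `P` with support exactly
`{(0,0,0), (0,0,1)}` contains a singleton `2`-cube; consequently, for the
complete `3`-partite `3`-uniform hypergraph on `3q` vertices (parts
`V_i = {i} × Fin q`, hyperedges all `(u₁, u₂, u₃)` with `u_i ∈ V_i`, arbitrary
positive weights), every ε-P-sparsifier has at least `q²` hyperedges. -/
theorem stmt17 (P : (Fin 3 → Fin 2) → Bool)
    (hP : ∀ t : Fin 3 → Fin 2, P t = true ↔ (t 0 = 0 ∧ t 1 = 0)) :
    containsSingletonCube 3 2 P ∧
    ∀ q : ℕ, 1 ≤ q →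
      ∀ (E : Finset (Fin 3 → Fin 3 × Fin q)),
        E = Finset.univ.image
          (fun u : Fin 3 → Fin q => fun i : Fin 3 => (i, u i)) →
      ∀ (w : (Fin 3 → Fin 3 × Fin q) → ℝ), (∀ e ∈ E, 0 < w e) →
      ∀ ε : ℝ, 0 < ε → ε < 1 →
      ∀ (Eε : Finset (Fin 3 → Fin 3 × Fin q)) (wε : (Fin 3 → Fin 3 × Fin q) → ℝ),
        Eε ⊆ E → (∀ e ∈ Eε, 0 < wε e) →
        (∀ A : Fin 3 × Fin q → Fin 2,
          (1 - ε) * hVal P E w A ≤ hVal P Eε wε A ∧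
          hVal P Eε wε A ≤ (1 + ε) * hVal P E w A) →
        q ^ 2 ≤ Eε.card := by

  constructor
  · refine ⟨fun _ b => b, fun _ => 0, 1, ?_, ⟨fun _ => 0, ?_⟩, ?_⟩
    · intro j; exact Fin.zero_ne_one
    · rw [hP]
      constructor <;> simp [cubeTuple]
    · intro y i h
      rw [hP] at h
      have h0 : i 0 = 0 := by simpa [cubeTuple] using h.1
      have h1 : i 1 = 0 := by simpa [cubeTuple] using h.2
      funext j
      fin_cases j <;> simpa
  · intro q hq E hE w hw ε hε0 hε1 Eε wε hsub hwε hspars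
    haveI : NeZero q := ⟨by omega⟩
    have key : ∀ a b : Fin q, ∃ e ∈ Eε, (e 0).2 = a ∧ (e 1).2 = b := by
      intro a b
      set A : Fin 3 × Fin q → Fin 2 := fun p =>
        if (p.1 = 0 ∧ p.2 = a) ∨ (p.1 = 1 ∧ p.2 = b) then 0 else 1 with hA
      have hPA : ∀ u : Fin 3 → Fin q,
          P (fun i => A (i, u i)) = true ↔ (u 0 = a ∧ u 1 = b) := by
        intro u
        rw [hP]
        constructor
        · rintro ⟨h0, h1⟩
          constructor
          · by_contra hc
            simp [hA, hc] at h0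
          · by_contra hc
            simp [hA, hc] at h1
        · rintro ⟨h0, h1⟩
          constructor <;> simp [hA, h0, h1]
      have hEpos : 0 < hVal P E w A := by
        apply Finset.sum_pos'
        · intro e he
          exact mul_nonneg (hw e he).le (by split <;> norm_num)
        · refine ⟨fun i => (i, ![a, b, 0] i), ?_, ?_⟩
          · rw [hE]
            exact Finset.mem_image.2 ⟨![a, b, 0], Finset.mem_univ _, rfl⟩
          · have hPe : P (fun i => A ((i, ![a, b, 0] i))) = true := by
              rw [hPA]
              constructor <;> rfl
            have hwpos : 0 < w (fun i => (i, ![a, b, 0] i)) := by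
              apply hw
              rw [hE]
              exact Finset.mem_image.2 ⟨![a, b, 0], Finset.mem_univ _, rfl⟩
            simpa [hPe] using hwpos
      have hεpos : 0 < hVal P Eε wε A := by
        have h1 := (hspars A).1
        have : 0 < (1 - ε) * hVal P E w A := mul_pos (by linarith) hEpos
        linarith
      by_contra hno
      push_neg at hno
      have hzero : hVal P Eε wε A = 0 := by
        apply Finset.sum_eq_zero
        intro e he
        obtain ⟨u, -, rfl⟩ := Finset.mem_image.1 (hE ▸ hsub he)
        have : P (fun i => A (i, u i)) ≠ true := by
          rw [Ne, hPA u]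
          intro h
          exact hno _ he h.1 h.2
        simp [Bool.not_eq_true] at this
        simp [this]
      rw [hzero] at hεpos
      exact lt_irrefl _ hεpos
    have hsurj : Set.SurjOn (fun e : Fin 3 → Fin 3 × Fin q => ((e 0).2, (e 1).2))
        (Eε : Set (Fin 3 → Fin 3 × Fin q)) (Finset.univ : Finset (Fin q × Fin q)) := by
      rintro ⟨a, b⟩ -
      obtain ⟨e, he, h1, h2⟩ := key a b
      exact ⟨e, he, by simp [h1, h2]⟩
    have := Finset.card_le_card_of_surjOn _ hsurj
    simpa [sq] using this
end
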